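/- For an integer K ≥ 1, the function f with f(x) = ((1-x)/x)(1 - (1-x)^K) on (0,1] and f(0) = K is convex on [0,1]. -/

import Mathlib

theorem stmt_9 (K : ℕ) (hK : 1 ≤ K) :
    ConvexOn ℝ (Set.Icc (0 : ℝ) 1)
      (fun x : ℝ => if x = 0 then (K : ℝ) else ((1 - x) / x) * (1 - (1 - x) ^ K)) := by
  have hg : ConvexOn ℝ (Set.Icc (0 : ℝ) 1)
      (fun x : ℝ => ∑ j ∈ Finset.range K, (1 - x) ^ (j + 1)) := by
    clear hK
    induction K with
    | zero => simpa using convexOn_const 0 (convex_Icc (0:ℝ) 1)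
    | succ n ih =>
      have h1 : ConvexOn ℝ (Set.Icc (0 : ℝ) 1) (fun x : ℝ => (1 - x) ^ (n + 1)) := by
        have := (convexOn_pow (𝕜 := ℝ) (n + 1)).comp_affineMap
          (AffineMap.lineMap (1 : ℝ) (0 : ℝ))
        have h2 := this.subset (fun x hx => by
          simp [AffineMap.lineMap_apply]
          linarith [hx.2]) (convex_Icc (0:ℝ) 1)
        refine h2.congr fun x _ => ?_
        simp [AffineMap.lineMap_apply]
        ring_nf
      refine (ih.add h1).congr fun x _ => ?_
      simp [Finset.sum_range_succ]
  refine hg.congr fun x hx => ?_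
  by_cases h : x = 0
  · subst h
    simp
  · have hx0 : (0:ℝ) < x := lt_of_le_of_ne hx.1 (Ne.symm h)
    have hr : (1 - x : ℝ) ≠ 1 := by intro hc; apply h; linarith
    have hsum : ∑ j ∈ Finset.range K, (1 - x) ^ j = ((1-x) ^ K - 1) / ((1-x) - 1) :=
      geom_sum_eq hr K
    have : ∑ j ∈ Finset.range K, (1 - x) ^ (j + 1)
        = (1 - x) * ∑ j ∈ Finset.range K, (1 - x) ^ j := by
      rw [Finset.mul_sum]
      exact Finset.sum_congr rfl fun j _ => by ring
    rw [show (1-x) - 1 = -x by ring, div_neg] at hsum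
    simp only [this, hsum, if_neg h]
    field_simp
    ring
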